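/- Let R be a complete noetherian local ring (a noetherian local ring complete in the topology defined by its maximal ideal) whose residue field has cardinality α, and let M be an R-module with Krull dimension of R/Ann_R(M) at most 1. Suppose that for some non-maximal prime ideal P of R, the module (R/P)^2 is isomorphic to a subquotient of M. Then M has at least α^ℵ₀ submodules (hence at least 2^ℵ₀ if α is countable), with equality if M is finitely generated. -/

import Mathlib

/-- `X` is (isomorphic to) a subquotient of the `R`-module `M`. -/
def IsSubquotientOf (R : Type u) [CommRing R]
    (X : Type x) [AddCommGroup X] [Module R X]
    (M : Type v) [AddCommGroup M] [Module R M] : Prop :=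
  ∃ (N : Submodule R M) (P : Submodule R (M ⧸ N)), Nonempty (X ≃ₗ[R] P)

section Aux
set_option synthInstance.maxHeartbeats 1000000
set_option maxHeartbeats 1000000

open IsLocalRing Cardinal

variable {R : Type u} [CommRing R] [IsNoetherianRing R] [IsLocalRing R]

/-- choice of elements deep in powers of the maximal ideal but not in `P + m^(n+1)` -/
theorem aux_not_le (P : Ideal R) (hP : P.IsPrime) (hPmax : ¬ P.IsMaximal) (n : ℕ) :
    ¬ ((maximalIdeal R) ^ n ≤ P ⊔ (maximalIdeal R) ^ (n + 1)) := by
  intro h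
  set m := maximalIdeal R
  have hPle : P ≤ m := le_maximalIdeal hP.ne_top
  have hPlt : P < m := lt_of_le_of_ne hPle (fun he => hPmax (he ▸ maximalIdeal.isMaximal R))
  set π := Ideal.Quotient.mk P
  set J : Ideal (R ⧸ P) := Ideal.map π m with hJ
  have hloc : IsLocalRing (R ⧸ P) := IsLocalRing.of_surjective' π Ideal.Quotient.mk_surjective
  -- J ≤ maximal ideal of R ⧸ P
  have hJle : J ≤ maximalIdeal (R ⧸ P) := by
    rw [hJ, Ideal.map_le_iff_le_comap]
    intro x hx
    simp only [Ideal.mem_comap]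
    rw [IsLocalRing.mem_maximalIdeal, mem_nonunits_iff]
    intro hu
    obtain ⟨y, hy⟩ := Ideal.Quotient.mk_surjective (↑hu.unit⁻¹ : R ⧸ P)
    have : π (x * y) = 1 := by
      rw [map_mul, hy]; exact hu.mul_val_inv
    have hxy : x * y - 1 ∈ P := by
      rw [← Ideal.Quotient.eq_zero_iff_mem]
      rw [map_sub, map_one, show (Ideal.Quotient.mk P) (x*y) = π (x*y) from rfl, this, sub_self]
    have h1 : (1 : R) ∈ m := by
      have : (1 : R) = x * y - (x * y - 1) := by ring
      rw [this]
      exact sub_mem (Ideal.mul_mem_right _ _ hx) (hPle hxy)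
    exact (maximalIdeal.isMaximal R).ne_top (Ideal.eq_top_of_isUnit_mem _ h1 isUnit_one)
  have hjac : J ≤ Ideal.jacobson ⊥ := by
    rw [IsLocalRing.jacobson_eq_maximalIdeal ⊥ bot_ne_top]; exact hJle
  -- J ^ n ≤ J • J ^ n
  have hle : (J ^ n : Ideal (R ⧸ P)) ≤ J • (J ^ n) := by
    have h1 : Ideal.map π (m ^ n) ≤ Ideal.map π (P ⊔ m ^ (n + 1)) := Ideal.map_mono h
    rw [Ideal.map_sup, Ideal.map_quotient_self, bot_sup_eq, Ideal.map_pow, Ideal.map_pow] at h1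
    rw [smul_eq_mul]
    calc (J ^ n : Ideal (R ⧸ P)) = Ideal.map π m ^ n := rfl
    _ ≤ Ideal.map π m ^ (n+1) := h1
    _ = J * J ^ n := by rw [pow_succ, mul_comm]
  have hbot : (J ^ n : Ideal (R ⧸ P)) = ⊥ :=
    Submodule.eq_bot_of_le_smul_of_le_jacobson_bot J _ (IsNoetherian.noetherian _) hle hjac
  obtain ⟨x, hxm, hxP⟩ := SetLike.exists_of_lt hPlt
  have hx0 : π x ≠ 0 := fun hc => hxP (Ideal.Quotient.eq_zero_iff_mem.1 hc)
  have : (π x) ^ n ∈ (J ^ n : Ideal (R ⧸ P)) := Ideal.pow_mem_pow (Ideal.mem_map_of_mem π hxm) n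
  rw [hbot, Ideal.mem_bot] at this
  rcases Nat.eq_zero_or_pos n with hn | hn
  · subst hn; simp at this
  · exact hx0 (pow_eq_zero_iff hn.ne' |>.1 this)

theorem smod_iff {R : Type u} [CommRing R] (I : Ideal R) (x y : R) :
    (x ≡ y [SMOD (I • ⊤ : Submodule R R)]) ↔ x - y ∈ I := by
  rw [SModEq.sub_mem, smul_eq_mul, Ideal.mul_top]

theorem aux_inj [IsAdicComplete (maximalIdeal R) R]
    (P : Ideal R) (hP : P.IsPrime) (hPmax : ¬ P.IsMaximal) :
    ∃ f : (ℕ → ResidueField R) → R ⧸ P, Function.Injective f := by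
  classical
  set m := maximalIdeal R with hm
  -- choose aₙ ∈ mⁿ \ (P ⊔ mⁿ⁺¹)
  have hex : ∀ n : ℕ, ∃ x, x ∈ m ^ n ∧ x ∉ P ⊔ m ^ (n + 1) := by
    intro n
    have := aux_not_le P hP hPmax n
    rw [SetLike.not_le_iff_exists] at this
    exact this.imp fun x hx => ⟨hx.1, hx.2⟩
  choose a ha1 ha2 using hex
  -- a section of the residue map
  set s : ResidueField R → R := Function.surjInv residue_surjective with hs
  have hsres : ∀ x, residue R (s x) = x := fun x => Function.surjInv_eq residue_surjective x
  -- partial sums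
  set F : (ℕ → ResidueField R) → ℕ → R :=
    fun c N => ∑ n ∈ Finset.range N, s (c n) * a n with hF
  have hFcauchy : ∀ c : ℕ → ResidueField R, ∀ {i j : ℕ}, i ≤ j →
      F c i ≡ F c j [SMOD (m ^ i • ⊤ : Submodule R R)] := by
    intro c i j hij
    rw [smod_iff, ← neg_sub, neg_mem_iff, ← Finset.sum_Ico_eq_sub _ hij]
    refine Submodule.sum_mem _ fun n hn => ?_
    rw [Finset.mem_Ico] at hn
    exact Ideal.pow_le_pow_right hn.1 (Ideal.mul_mem_left _ _ (ha1 n))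
  -- limits
  have hL : ∀ c : ℕ → ResidueField R, ∃ L : R, ∀ n, F c n ≡ L [SMOD (m ^ n • ⊤ : Submodule R R)] :=
    fun c => IsPrecomplete.prec (IsAdicComplete.toIsPrecomplete) (fun {i j} h => hFcauchy c h)
  choose L hLspec using hL
  refine ⟨fun c => Ideal.Quotient.mk P (L c), ?_⟩
  intro c c' hcc
  by_contra hne
  have hex2 : ∃ n, c n ≠ c' n := Function.ne_iff.1 hne
  set N := Nat.find hex2 with hN
  have hNspec : c N ≠ c' N := Nat.find_spec hex2
  have hNmin : ∀ i < N, c i = c' i := fun i hi => not_not.1 (Nat.find_min hex2 hi)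
  set u : R := s (c N) - s (c' N) with hu
  -- the partial sums agree up to the Nth term
  have hsum : F c (N + 1) - F c' (N + 1) = u * a N := by
    rw [hF]
    simp only [Finset.sum_range_succ]
    rw [Finset.sum_congr rfl (fun i hi => by rw [hNmin i (Finset.mem_range.1 hi)])]
    ring
  -- key membership
  have hkey : (L c - L c') - u * a N ∈ m ^ (N + 1) := by
    have h1 : F c (N+1) - L c ∈ m ^ (N+1) := (smod_iff _ _ _).1 (hLspec c (N+1))
    have h2 : F c' (N+1) - L c' ∈ m ^ (N+1) := (smod_iff _ _ _).1 (hLspec c' (N+1))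
    have : (L c - L c') - u * a N = (F c' (N+1) - L c') - (F c (N+1) - L c) := by
      rw [← hsum]; ring
    rw [this]
    exact sub_mem h2 h1
  have hP' : L c - L c' ∈ P := by
    rwa [Ideal.Quotient.eq] at hcc
  have hmem : u * a N ∈ P ⊔ m ^ (N + 1) := by
    have : u * a N = (L c - L c') - ((L c - L c') - u * a N) := by ring
    rw [this]
    exact sub_mem (Ideal.mem_sup_left hP') (Ideal.mem_sup_right hkey)
  -- u is a unit
  have huu : IsUnit u := by
    by_contra hnu
    have : u ∈ m := (IsLocalRing.mem_maximalIdeal u).2 hnu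
    have : residue R u = 0 := Ideal.Quotient.eq_zero_iff_mem.2 this
    rw [hu, map_sub, hsres, hsres, sub_eq_zero] at this
    exact hNspec this
  obtain ⟨v, hv⟩ := huu.exists_left_inv
  have : a N ∈ P ⊔ m ^ (N + 1) := by
    have : a N = v * (u * a N) := by rw [← mul_assoc, hv, one_mul]
    rw [this]
    exact Ideal.mul_mem_left _ _ hmem
  exact ha2 N this




/-- cardinality of a finite-function type into the residue field -/
theorem aux_pow_le {k : Type u} (T : Type u) [Finite T] :
    #(T → k) ≤ max #k ℵ₀ := by
  cases nonempty_fintype T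
  rw [← Cardinal.power_def]
  rcases lt_or_ge #k ℵ₀ with h | h
  · exact le_max_of_le_right (power_lt_aleph0 h (lt_aleph0_of_finite T)).le
  · refine le_max_of_le_left ?_
    rw [Cardinal.mk_fintype T]
    exact power_nat_le h

theorem aux_quot_card (n : ℕ) :
    #(R ⧸ (maximalIdeal R ^ n : Ideal R)) ≤ max #(ResidueField R) ℵ₀ := by
  classical
  induction n with
  | zero =>
    have : Subsingleton (R ⧸ (maximalIdeal R ^ 0 : Ideal R)) := by
      exact Ideal.Quotient.subsingleton_iff.mpr (by rw [pow_zero]; exact Ideal.one_eq_top)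
    exact le_max_of_le_right mk_le_aleph0
  | succ n ih =>
    set m := maximalIdeal R
    set I : Submodule R R := (m ^ (n+1) : Ideal R)
    set Qn : Submodule R (R ⧸ I) := Submodule.map I.mkQ (m ^ n : Ideal R) with hQn
    -- third isomorphism
    have hle : I ≤ ((m ^ n : Ideal R) : Submodule R R) :=
      Ideal.pow_le_pow_right (Nat.le_succ n)
    have e1 : ((R ⧸ I) ⧸ Qn) ≃ₗ[R] R ⧸ ((m ^ n : Ideal R) : Submodule R R) :=
      Submodule.quotientQuotientEquivQuotient I _ hle
    -- injection R⧸I ↪ (R⧸I ⧸ Qn) × Qn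
    have hinj : ∃ g : (R ⧸ I) → ((R ⧸ I) ⧸ Qn) × Qn, Function.Injective g := by
      set σ := Function.surjInv (Submodule.mkQ_surjective Qn) with hσ
      have hσs : ∀ x, Qn.mkQ (σ x) = x := fun x => Function.surjInv_eq _ x
      refine ⟨fun a => ⟨Qn.mkQ a, ⟨a - σ (Qn.mkQ a), ?_⟩⟩, ?_⟩
      · rw [← Submodule.Quotient.mk_eq_zero]
        change Qn.mkQ _ = 0
        rw [map_sub, hσs, sub_self]
      · intro x y hxy
        simp only [Prod.mk.injEq, Subtype.mk.injEq] at hxy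
        obtain ⟨h1, h2⟩ := hxy
        have := congrArg (· + σ (Qn.mkQ x)) h2
        simpa [h1] using this
    obtain ⟨g, hg⟩ := hinj
    have hQcard : #Qn ≤ max #(ResidueField R) ℵ₀ := by
      -- Qn is finitely generated and killed by m
      have hfg : Qn.FG := Submodule.FG.map _ (IsNoetherian.noetherian _)
      obtain ⟨T, hT⟩ := hfg
      -- m kills Qn
      have hkill : ∀ x ∈ m, ∀ q ∈ Qn, x • q = 0 := by
        intro x hx q hq
        obtain ⟨y, hy, rfl⟩ := hq
        rw [← map_smul, Submodule.mkQ_apply, Submodule.Quotient.mk_eq_zero]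
        show x • y ∈ (m ^ (n+1) : Ideal R)
        rw [smul_eq_mul, pow_succ, mul_comm x y]
        exact Ideal.mul_mem_mul hy hx
      have hTsub : ∀ t ∈ T, (t : R ⧸ I) ∈ Qn := fun t ht => hT ▸ Submodule.subset_span ht
      set s : ResidueField R → R := Function.surjInv residue_surjective with hs
      have hsres : ∀ x, residue R (s x) = x := fun x => Function.surjInv_eq residue_surjective x
      have hmem : ∀ c : { x // x ∈ T } → ResidueField R,
          (∑ t ∈ T.attach, s (c t) • (t : R ⧸ I)) ∈ Qn := by
        intro c
        exact Submodule.sum_mem _ fun t _ => Submodule.smul_mem _ _ (hTsub t t.2)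
      have hsur : ∀ q : Qn, ∃ c : { x // x ∈ T } → ResidueField R,
          (∑ t ∈ T.attach, s (c t) • (t : R ⧸ I)) = (q : R ⧸ I) := by
        intro q
        have hq : (q : R ⧸ I) ∈ Submodule.span R (↑T : Set (R ⧸ I)) := by rw [hT]; exact q.2
        rw [Submodule.mem_span_finset] at hq
        obtain ⟨f, -, hf⟩ := hq
        refine ⟨fun t => residue R (f t), ?_⟩
        rw [← hf, ← Finset.sum_attach T (fun t => f t • t)]
        refine Finset.sum_congr rfl fun t _ => ?_
        have hmm : s (residue R (f t)) - f t ∈ m := by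
          have : residue R (s (residue R (f t)) - f t) = 0 := by
            rw [map_sub, hsres, sub_self]
          exact Ideal.Quotient.eq_zero_iff_mem.1 this
        have h0 : (s (residue R (f t)) - f t) • (t : R ⧸ I) = 0 :=
          hkill _ hmm _ (hTsub t t.2)
        rw [sub_smul, sub_eq_zero] at h0
        exact h0
      have hsurj : Function.Surjective
          (fun c : { x // x ∈ T } → ResidueField R => (⟨_, hmem c⟩ : Qn)) := by
        intro q
        obtain ⟨c, hc⟩ := hsur q
        exact ⟨c, Subtype.ext hc⟩
      exact (mk_le_of_surjective hsurj).trans (aux_pow_le _)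
    calc #(R ⧸ I) ≤ #(((R ⧸ I) ⧸ Qn) × Qn) := mk_le_of_injective hg
    _ = #((R ⧸ I) ⧸ Qn) * #Qn := by rw [mk_prod]; simp
    _ = #(R ⧸ ((m ^ n : Ideal R) : Submodule R R)) * #Qn := by rw [mk_congr e1.toEquiv]
    _ ≤ max #(ResidueField R) ℵ₀ * max #(ResidueField R) ℵ₀ := mul_le_mul' ih hQcard
    _ = max #(ResidueField R) ℵ₀ := mul_eq_self (le_max_right _ _)

theorem smod_iff' {R : Type u} [CommRing R] (I : Ideal R) (x y : R) :
    (x ≡ y [SMOD (I • ⊤ : Submodule R R)]) ↔ x - y ∈ I := by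
  rw [SModEq.sub_mem, smul_eq_mul, Ideal.mul_top]

theorem aux_mkR [IsAdicComplete (maximalIdeal R) R] :
    #R ≤ (#(ResidueField R) + ℵ₀) ^ ℵ₀ := by
  classical
  set m := maximalIdeal R
  set W : Type u := ResidueField R ⊕ ULift.{u} ℕ with hW
  have hWeq : #W = #(ResidueField R) + ℵ₀ := by
    simp only [hW, mk_sum, mk_uLift, mk_nat, lift_aleph0, lift_id', lift_id]
  have hWcard : max #(ResidueField R) ℵ₀ ≤ #W := by
    rw [hWeq]; exact max_le le_self_add le_add_self
  have hemb : ∀ n : ℕ, ∃ e : (R ⧸ (m ^ n : Ideal R)) → W, Function.Injective e := by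
    intro n
    have := (aux_quot_card (R := R) n).trans hWcard
    rw [le_def] at this
    obtain ⟨e⟩ := this
    exact ⟨e, e.injective⟩
  choose e he using hemb
  have hinj : Function.Injective (fun (x : R) (n : ℕ) => e n (Ideal.Quotient.mk (m ^ n) x)) := by
    intro x y hxy
    have h1 : ∀ n, Ideal.Quotient.mk (m ^ n) x = Ideal.Quotient.mk (m ^ n) y :=
      fun n => he n (congrFun hxy n)
    have h2 : x - y = 0 := by
      refine IsHausdorff.haus (IsAdicComplete.toIsHausdorff (I := m) (M := R)) (x - y) fun n => ?_
      rw [smod_iff', sub_zero]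
      exact Ideal.Quotient.eq.1 (h1 n)
    exact sub_eq_zero.mp h2
  have h3 : #R ≤ #(ℕ → W) := mk_le_of_injective hinj
  refine h3.trans ?_
  have h4 : #(ℕ → W) = #W ^ ℵ₀ := by
    rw [mk_arrow]
    simp only [mk_nat, lift_aleph0, lift_id', lift_id]
  rw [h4, hWeq]

theorem aux_arith {α : Cardinal.{u}} (h2 : 2 ≤ α) :
    (α + ℵ₀) ^ ℵ₀ = α ^ ℵ₀ ∧ max α ℵ₀ ≤ α ^ ℵ₀ := by
  have hα0 : α ≠ 0 := by positivity
  have h1 : α ≤ α ^ ℵ₀ := by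
    calc α = α ^ (1 : Cardinal) := (power_one α).symm
    _ ≤ α ^ ℵ₀ := power_le_power_left hα0 one_le_aleph0
  have hℵ : ℵ₀ ≤ α ^ ℵ₀ :=
    le_trans (aleph0_le_continuum) (by rw [← two_power_aleph0]; exact power_le_power_right h2)
  have hsum : α + ℵ₀ ≤ α ^ ℵ₀ := add_le_of_le hℵ h1 hℵ
  constructor
  · refine le_antisymm ?_ (power_le_power_right le_self_add)
    calc (α + ℵ₀) ^ ℵ₀ ≤ (α ^ ℵ₀) ^ ℵ₀ := power_le_power_right hsum
    _ = α ^ ℵ₀ := by rw [← power_mul, aleph0_mul_aleph0]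
  · exact max_le h1 hℵ


/-- Let `R` be a complete noetherian local ring whose residue field has cardinality `α`, and
`M` an `R`-module with `dim (R ⧸ Ann M) ≤ 1`.  If `(R/P)²` is a subquotient of `M` for some
non-maximal prime `P`, then `M` has at least `α ^ ℵ₀` submodules (hence at least `2^ℵ₀` if
`α` is countable), with equality if `M` is finitely generated. -/
theorem card_submodules_ge_of_square_subquotient
    (R : Type u) [CommRing R] [IsNoetherianRing R] [IsLocalRing R]
    [IsAdicComplete (IsLocalRing.maximalIdeal R) R]
    (M : Type v) [AddCommGroup M] [Module R M]
    (hdim : ringKrullDim (R ⧸ Module.annihilator R M) ≤ 1)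
    (P : Ideal R) (hP : P.IsPrime) (hPmax : ¬ P.IsMaximal)
    (hsq : IsSubquotientOf R ((R ⧸ P) × (R ⧸ P)) M) :
    Cardinal.lift.{v} (Cardinal.mk (IsLocalRing.ResidueField R) ^ Cardinal.aleph0) ≤
        Cardinal.lift.{u} (Cardinal.mk (Submodule R M)) ∧
      (Countable (IsLocalRing.ResidueField R) →
        Cardinal.continuum ≤ Cardinal.mk (Submodule R M)) ∧
      (Module.Finite R M →
        Cardinal.lift.{u} (Cardinal.mk (Submodule R M)) =
          Cardinal.lift.{v} (Cardinal.mk (IsLocalRing.ResidueField R) ^ Cardinal.aleph0)) := by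
  classical
  obtain ⟨N, Q, ⟨e⟩⟩ := hsq
  obtain ⟨f, hf⟩ := aux_inj P hP hPmax
  -- the span injection into submodules of (R⧸P)²
  have hspan : ∀ d d' : R ⧸ P,
      Submodule.span R {((1 : R ⧸ P), d)} = Submodule.span R {((1 : R ⧸ P), d')} → d = d' := by
    intro d d' h
    have h1 : ((1 : R ⧸ P), d') ∈ Submodule.span R {((1 : R ⧸ P), d)} := by
      rw [h]; exact Submodule.mem_span_singleton_self _
    rw [Submodule.mem_span_singleton] at h1
    obtain ⟨r, hr⟩ := h1
    rw [Prod.smul_mk, Prod.mk.injEq] at hr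
    obtain ⟨hr1, hr2⟩ := hr
    have hmk : (Ideal.Quotient.mk P r) = 1 := by
      rw [← hr1]; simp [Algebra.smul_def]
    rw [← hr2]
    refine Eq.symm ?_
    calc r • d = Ideal.Quotient.mk P r * d := by simp [Algebra.smul_def]
    _ = d := by rw [hmk, one_mul]
  -- the subquotient chain injection
  have hΘex : ∃ Θ : Submodule R ((R ⧸ P) × (R ⧸ P)) → Submodule R M, Function.Injective Θ := by
    refine ⟨fun S =>
      Submodule.comap N.mkQ (Submodule.map Q.subtype ((Submodule.orderIsoMapComap e) S)),
      fun S S' h => ?_⟩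
    have h1 := Submodule.comap_injective_of_surjective (Submodule.mkQ_surjective N) h
    have h2 := Submodule.map_injective_of_injective Q.injective_subtype h1
    exact (Submodule.orderIsoMapComap e).injective h2
  obtain ⟨Θ, hΘinj⟩ := hΘex
  have hGex : ∃ G : (ℕ → ResidueField R) → Submodule R M, Function.Injective G :=
    ⟨fun c => Θ (Submodule.span R {((1 : R ⧸ P), f c)}),
      fun c c' h => hf (hspan _ _ (hΘinj h))⟩
  obtain ⟨G, hGinj⟩ := hGex
  have hmkarrow : #(ℕ → ResidueField R) = #(ResidueField R) ^ ℵ₀ := by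
    rw [mk_arrow]; simp
  have hconj1 : Cardinal.lift.{v} (#(ResidueField R) ^ ℵ₀) ≤
      Cardinal.lift.{u} #(Submodule R M) := by
    rw [← hmkarrow]
    exact lift_mk_le'.mpr ⟨⟨G, hGinj⟩⟩
  have h2α : (2 : Cardinal) ≤ #(ResidueField R) := Cardinal.two_le_iff.mpr ⟨0, 1, zero_ne_one⟩
  refine ⟨hconj1, ?_, ?_⟩
  · intro _
    have hc : (𝔠 : Cardinal.{u}) ≤ #(ResidueField R) ^ ℵ₀ := by
      rw [← two_power_aleph0]; exact power_le_power_right h2α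
    have hfin := (lift_le.mpr hc).trans hconj1
    rw [lift_continuum] at hfin
    rw [← lift_le.{u}, lift_continuum]
    exact hfin
  · intro hfin
    obtain ⟨harith, _⟩ := aux_arith h2α
    have hR : #R ≤ #(ResidueField R) ^ ℵ₀ := (aux_mkR).trans_eq harith
    -- M is infinite
    have hMNinf : Infinite (M ⧸ N) := by
      have hembex : ∃ emb : (ℕ → ResidueField R) → M ⧸ N, Function.Injective emb := by
        refine ⟨fun c => ((e ((f c, 0)) : Q) : M ⧸ N), fun c c' h => ?_⟩
        have h1 : (e ((f c, 0)) : Q) = e ((f c', 0)) := Subtype.ext h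
        have h2 := e.injective h1
        rw [Prod.mk.injEq] at h2
        exact hf h2.1
      obtain ⟨emb, hemb⟩ := hembex
      exact Infinite.of_injective emb hemb
    have hMinf : Infinite M := Infinite.of_surjective _ (Submodule.mkQ_surjective N)
    -- submodules inject into finsets
    have hfg : ∀ S : Submodule R M, ∃ T : Finset M, Submodule.span R ↑T = S :=
      fun S => IsNoetherian.noetherian S
    choose g hg using hfg
    have hginj : Function.Injective g := fun S S' h => by rw [← hg S, ← hg S', h]
    have hcard2 : #(Submodule R M) ≤ #M :=
      (mk_le_of_injective hginj).trans_eq (mk_finset_of_infinite M)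
    obtain ⟨t, gsur, hgsur⟩ := Module.Finite.exists_fin' R M
    have hMemb : Cardinal.lift.{u} #M ≤ Cardinal.lift.{v} #(Fin t → R) :=
      lift_mk_le'.mpr ⟨⟨Function.surjInv hgsur, Function.injective_surjInv hgsur⟩⟩
    have hFinR : #(Fin t → R) ≤ #(ResidueField R) ^ ℵ₀ := by
      have harr : #(Fin t → R) = #R ^ (t : Cardinal) := by
        rw [mk_arrow]; simp
      rw [harr]
      calc (#R) ^ (t : Cardinal) ≤ (#(ResidueField R) ^ ℵ₀) ^ (t : Cardinal) :=
        power_le_power_right hR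
      _ ≤ (#(ResidueField R) ^ ℵ₀) ^ ℵ₀ :=
        power_le_power_left (power_ne_zero _ (mk_ne_zero (ResidueField R))) (nat_lt_aleph0 t).le
      _ = #(ResidueField R) ^ ℵ₀ := by rw [← power_mul, aleph0_mul_aleph0]
    refine le_antisymm ?_ hconj1
    calc Cardinal.lift.{u} #(Submodule R M) ≤ Cardinal.lift.{u} #M := lift_le.mpr hcard2
    _ ≤ Cardinal.lift.{v} #(Fin t → R) := hMemb
    _ ≤ Cardinal.lift.{v} (#(ResidueField R) ^ ℵ₀) := lift_le.mpr hFinR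

end Aux
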